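/- Let φ, ψ ∈ C_a with ∫φ dm = ∫ψ dm = 1. Then ‖φ − ψ‖_BV ≤ 2(1+a) Θ_a(φ, ψ). -/

import Mathlib

open MeasureTheory ENNReal

noncomputable section

namespace HilbertCone

variable {X : Type*} [MeasurableSpace X]

/-- The cone `C_a = {φ ∈ BV : φ ≥ 0 and var(φ) ≤ a ∫ φ dm}`. -/
def coneC (m : Measure X) (var : (X → ℝ) → ℝ≥0∞) (a : ℝ) : Set (X → ℝ) :=
  {φ | Integrable φ m ∧ var φ < ∞ ∧ 0 ≤ᵐ[m] φ ∧
    var φ ≤ ENNReal.ofReal (a * ∫ x, φ x ∂m)}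

/-- The partial order `φ ⪯ ψ` iff `ψ − φ ∈ C_a ∪ {0}`. -/
def preceq (m : Measure X) (var : (X → ℝ) → ℝ≥0∞) (a : ℝ) (φ ψ : X → ℝ) : Prop :=
  ψ - φ ∈ coneC m var a ∨ ψ - φ = 0

/-- `Ξ(φ,ψ) = sup {λ ∈ ℝ⁺ : λφ ⪯ ψ}` (equal to `0` if the set is empty). -/
def Xi (m : Measure X) (var : (X → ℝ) → ℝ≥0∞) (a : ℝ) (φ ψ : X → ℝ) : ℝ≥0∞ :=
  ⨆ (l : ℝ) (_ : 0 < l ∧ preceq m var a (l • φ) ψ), ENNReal.ofReal l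

/-- `Υ(φ,ψ) = inf {μ ∈ ℝ⁺ : ψ ⪯ μφ}` (equal to `∞` if the set is empty). -/
def Upsilon (m : Measure X) (var : (X → ℝ) → ℝ≥0∞) (a : ℝ) (φ ψ : X → ℝ) : ℝ≥0∞ :=
  ⨅ (u : ℝ) (_ : 0 < u ∧ preceq m var a ψ (u • φ)), ENNReal.ofReal u

/-- The Hilbert projective (pseudo-)metric `Θ_a(φ,ψ) = log (Υ(φ,ψ) / Ξ(φ,ψ))`. -/
def Theta (m : Measure X) (var : (X → ℝ) → ℝ≥0∞) (a : ℝ) (φ ψ : X → ℝ) : EReal :=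
  ENNReal.log (Upsilon m var a φ ψ / Xi m var a φ ψ)

/-- `‖φ‖_BV = var(φ) + ‖φ‖₁`. -/
def bvNorm (m : Measure X) (var : (X → ℝ) → ℝ≥0∞) (φ : X → ℝ) : ℝ≥0∞ :=
  var φ + eLpNorm φ 1 m

/-- Lemma A.2: the BV norm is controlled by the Hilbert metric:
if `φ, ψ ∈ C_a` with `∫ φ dm = ∫ ψ dm = 1`, then `‖φ − ψ‖_BV ≤ 2(1+a) Θ_a(φ, ψ)`. -/
theorem bv_le_hilbert_metric (m : Measure X) [IsProbabilityMeasure m]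
    (var : (X → ℝ) → ℝ≥0∞)
    (hv1 : ∀ (t : ℝ) (h : X → ℝ), var (fun x => t * h x) = ENNReal.ofReal |t| * var h)
    (hv2 : ∀ g h : X → ℝ, var (g + h) ≤ var g + var h)
    (a : ℝ) (ha : 0 < a) (φ ψ : X → ℝ)
    (hφ : φ ∈ coneC m var a) (hψ : ψ ∈ coneC m var a)
    (hφ1 : (∫ x, φ x ∂m) = 1) (hψ1 : (∫ x, ψ x ∂m) = 1) :
    ((bvNorm m var (φ - ψ) : ℝ≥0∞) : EReal) ≤
      ((2 * (1 + a) : ℝ) : EReal) * Theta m var a φ ψ := by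

  have ha2 : (0:ℝ) < 2 * (1 + a) := by nlinarith
  have hφi := hφ.1
  have hψi := hψ.1
  -- integral comparison along the order
  have hint : ∀ f g : X → ℝ, Integrable f m → Integrable g m →
      preceq m var a f g → ∫ x, f x ∂m ≤ ∫ x, g x ∂m := by
    intro f g hf hg h
    rcases h with h | h
    · have h0 : 0 ≤ ∫ x, (g - f) x ∂m := integral_nonneg_of_ae h.2.2.1
      simp only [Pi.sub_apply] at h0
      rw [integral_sub hg hf] at h0
      linarith
    · have hfg : g = f := sub_eq_zero.mp h
      rw [hfg]
  have hsmul_int : ∀ (l : ℝ), ∫ x, (l • φ) x ∂m = l := by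
    intro l
    simp only [Pi.smul_apply, smul_eq_mul]
    rw [integral_const_mul, hφ1, mul_one]
  have hle1 : ∀ l : ℝ, preceq m var a (l • φ) ψ → l ≤ 1 := by
    intro l h
    have h2 := hint (l • φ) ψ (hφi.smul l) hψi h
    rwa [hsmul_int, hψ1] at h2
  have hge1 : ∀ u : ℝ, preceq m var a ψ (u • φ) → 1 ≤ u := by
    intro u h
    have h2 := hint ψ (u • φ) hψi (hφi.smul u) h
    rwa [hsmul_int, hψ1] at h2
  have hU1 : 1 ≤ Upsilon m var a φ ψ := by
    refine le_iInf fun u => le_iInf fun hu => ?_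
    exact ENNReal.one_le_ofReal.mpr (hge1 u hu.2)
  have hXile1 : Xi m var a φ ψ ≤ 1 := by
    refine iSup_le fun l => iSup_le fun hl => ?_
    exact ENNReal.ofReal_le_one.mpr (hle1 l hl.2)
  -- the key estimate for each admissible l
  have key : ∀ l : ℝ, 0 < l → preceq m var a (l • φ) ψ →
      bvNorm m var (φ - ψ) ≤ ENNReal.ofReal (2 * (1 + a)) * (1 - ENNReal.ofReal l) := by
    intro l hl hpre
    have hl1 : l ≤ 1 := hle1 l hpre
    rcases hpre with hco | hzero
    · obtain ⟨hχi, hχv, hχ0, hχa⟩ := hco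
      set χ : X → ℝ := ψ - l • φ with hχ
      have hχx : ∀ x, χ x = ψ x - l * φ x := by
        intro x; simp [hχ]
      have hintχ : ∫ x, χ x ∂m = 1 - l := by
        calc ∫ x, χ x ∂m = ∫ x, (ψ x - l * φ x) ∂m := by simp only [hχx]
        _ = (∫ x, ψ x ∂m) - ∫ x, l * φ x ∂m := integral_sub hψi (hφi.const_mul l)
        _ = 1 - l := by rw [hψ1, integral_const_mul, hφ1, mul_one]
      have hvφ : var φ ≤ ENNReal.ofReal a := by
        have h2 := hφ.2.2.2; rwa [hφ1, mul_one] at h2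
      have hvχ : var χ ≤ ENNReal.ofReal (a * (1 - l)) := by
        have h2 := hχa; rwa [hintχ] at h2
      have hdecomp : φ - ψ = (fun x => (1 - l) * φ x) + fun x => (-1) * χ x := by
        funext x
        simp only [Pi.add_apply, Pi.sub_apply, hχx]
        ring
      have hvar : var (φ - ψ) ≤ ENNReal.ofReal ((1 - l) * a + a * (1 - l)) := by
        calc var (φ - ψ) ≤ var (fun x => (1 - l) * φ x) + var (fun x => (-1) * χ x) := by
              rw [hdecomp]; exact hv2 _ _
        _ = ENNReal.ofReal (1 - l) * var φ + var χ := by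
              rw [hv1, hv1, abs_of_nonneg (by linarith : (0:ℝ) ≤ 1 - l)]
              norm_num
        _ ≤ ENNReal.ofReal (1 - l) * ENNReal.ofReal a + ENNReal.ofReal (a * (1 - l)) := by
              gcongr
        _ = ENNReal.ofReal ((1 - l) * a + a * (1 - l)) := by
              rw [← ENNReal.ofReal_mul (by linarith), ← ENNReal.ofReal_add (by nlinarith) (by nlinarith)]
      have hsub : Integrable (φ - ψ) m := hφi.sub hψi
      have hL1 : eLpNorm (φ - ψ) 1 m ≤ ENNReal.ofReal ((1 - l) + (1 - l)) := by
        rw [eLpNorm_one_eq_lintegral_enorm, ← ofReal_integral_norm_eq_lintegral_enorm hsub]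
        apply ENNReal.ofReal_le_ofReal
        have hb : ∀ᵐ x ∂m, ‖(φ - ψ) x‖ ≤ (1 - l) * φ x + χ x := by
          filter_upwards [hφ.2.2.1, hχ0] with x h1 h2
          simp only [Pi.zero_apply] at h1 h2
          simp only [Pi.sub_apply, Real.norm_eq_abs]
          have hx : φ x - ψ x = (1 - l) * φ x - χ x := by rw [hχx]; ring
          rw [hx, abs_le]
          have hmul : 0 ≤ (1 - l) * φ x := mul_nonneg (by linarith) h1
          constructor <;> nlinarith
        calc ∫ x, ‖(φ - ψ) x‖ ∂m ≤ ∫ x, ((1 - l) * φ x + χ x) ∂m :=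
              integral_mono_ae hsub.norm ((hφi.const_mul _).add hχi) hb
        _ = (1 - l) + (1 - l) := by
              rw [integral_add (hφi.const_mul _) hχi, integral_const_mul, hφ1, hintχ]; ring
      have htot := add_le_add hvar hL1
      refine le_trans htot ?_
      rw [← ENNReal.ofReal_add (by nlinarith) (by nlinarith),
        ← ENNReal.ofReal_one, ← ENNReal.ofReal_sub _ hl.le,
        ← ENNReal.ofReal_mul (by positivity)]
      exact ENNReal.ofReal_le_ofReal (le_of_eq (by ring))
    · -- degenerate case : ψ = l • φ, so l = 1 and φ = ψ
      have hψeq : ψ = l • φ := sub_eq_zero.mp hzero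
      have hl1' : l = 1 := by
        have h2 : (1:ℝ) = l := by
          calc (1:ℝ) = ∫ x, ψ x ∂m := hψ1.symm
          _ = ∫ x, (l • φ) x ∂m := by rw [hψeq]
          _ = l := hsmul_int l
        exact h2.symm
      have hφψ : φ - ψ = 0 := by rw [hψeq, hl1', one_smul, sub_self]
      rw [hφψ]
      have hvar0 : var 0 = 0 := by
        have h0 := hv1 0 (0 : X → ℝ)
        exact (by simpa using h0 : var (fun _ => (0:ℝ)) = 0)
      simp [bvNorm, hvar0]
  -- degenerate cases of the metric
  by_cases hXi0 : Xi m var a φ ψ = 0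
  · have hU0 : Upsilon m var a φ ψ ≠ 0 := by
      intro h; rw [h] at hU1; exact (by norm_num : ¬ ((1:ℝ≥0∞) ≤ 0)) hU1
    have hT : Theta m var a φ ψ = ⊤ := by
      simp only [Theta]
      rw [hXi0, ENNReal.div_zero hU0, ENNReal.log_top]
    rw [hT, EReal.coe_mul_top_of_pos ha2]
    exact le_top
  by_cases hUt : Upsilon m var a φ ψ = ∞
  · have hXit : Xi m var a φ ψ ≠ ∞ := (lt_of_le_of_lt hXile1 (by norm_num)).ne
    have hT : Theta m var a φ ψ = ⊤ := by
      simp only [Theta]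
      rw [hUt, ENNReal.top_div_of_ne_top hXit, ENNReal.log_top]
    rw [hT, EReal.coe_mul_top_of_pos ha2]
    exact le_top
  -- main case
  have hXit : Xi m var a φ ψ ≠ ∞ := (lt_of_le_of_lt hXile1 (by norm_num)).ne
  set x : ℝ := (Xi m var a φ ψ).toReal with hxdef
  have hx0 : 0 < x := ENNReal.toReal_pos hXi0 hXit
  have hx1 : x ≤ 1 := by
    have h2 := ENNReal.toReal_mono (by norm_num : (1:ℝ≥0∞) ≠ ∞) hXile1
    simpa using h2
  have hne : ∃ l : ℝ, 0 < l ∧ preceq m var a (l • φ) ψ := by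
    by_contra h
    push_neg at h
    exact hXi0 (le_antisymm (iSup_le fun l => iSup_le fun hl => ((h l hl.1) hl.2).elim)
      zero_le)
  haveI : Nonempty {l : ℝ // 0 < l ∧ preceq m var a (l • φ) ψ} :=
    ⟨⟨hne.choose, hne.choose_spec⟩⟩
  have hXieq : Xi m var a φ ψ
      = ⨆ p : {l : ℝ // 0 < l ∧ preceq m var a (l • φ) ψ}, ENNReal.ofReal p.1 := by
    simp only [Xi]
    exact iSup_subtype'
  have hBound : bvNorm m var (φ - ψ)
      ≤ ENNReal.ofReal (2 * (1 + a)) * (1 - Xi m var a φ ψ) := by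
    rw [hXieq, ENNReal.sub_iSup (by norm_num : (1:ℝ≥0∞) ≠ ∞),
      ENNReal.mul_iInf_of_ne (by simpa using (ENNReal.ofReal_pos.mpr ha2).ne')
        ENNReal.ofReal_ne_top]
    exact le_iInf fun p => key p.1 p.2.1 p.2.2
  have h1div : (1:ℝ≥0∞) ≤ Upsilon m var a φ ψ / Xi m var a φ ψ := by
    rw [ENNReal.le_div_iff_mul_le (Or.inl hXi0) (Or.inl hXit), one_mul]
    exact hXile1.trans hU1
  have hdivt : Upsilon m var a φ ψ / Xi m var a φ ψ ≠ ∞ :=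
    (ENNReal.div_lt_top hUt hXi0).ne
  set t : ℝ := (Upsilon m var a φ ψ / Xi m var a φ ψ).toReal with htdef
  have ht0 : 0 < t := ENNReal.toReal_pos (by intro h; rw [h] at h1div; simp at h1div) hdivt
  have htx : x⁻¹ ≤ t := by
    have hinv : (Xi m var a φ ψ)⁻¹ ≤ Upsilon m var a φ ψ / Xi m var a φ ψ := by
      calc (Xi m var a φ ψ)⁻¹ = 1 * (Xi m var a φ ψ)⁻¹ := (one_mul _).symm
      _ ≤ Upsilon m var a φ ψ * (Xi m var a φ ψ)⁻¹ := mul_le_mul_left hU1 _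
      _ = Upsilon m var a φ ψ / Xi m var a φ ψ := (div_eq_mul_inv _ _).symm
    have h2 := ENNReal.toReal_mono hdivt hinv
    rwa [ENNReal.toReal_inv] at h2
  have hlog : Theta m var a φ ψ = ((Real.log t : ℝ) : EReal) := by
    simp only [Theta]
    rw [ENNReal.log_pos_real' ht0]
  have hfinal_en : bvNorm m var (φ - ψ) ≤ ENNReal.ofReal ((2 * (1 + a)) * (1 - x)) := by
    refine hBound.trans (le_of_eq ?_)
    rw [← ENNReal.ofReal_toReal hXit, ← hxdef, ← ENNReal.ofReal_one,
      ← ENNReal.ofReal_sub _ (le_of_lt hx0), ← ENNReal.ofReal_mul (by positivity)]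
  have hlogt : 1 - x ≤ Real.log t := by
    have h1 : Real.log x ≤ x - 1 := Real.log_le_sub_one_of_pos hx0
    have h2 : Real.log x⁻¹ ≤ Real.log t := Real.log_le_log (by positivity) htx
    rw [Real.log_inv] at h2
    linarith
  calc ((bvNorm m var (φ - ψ) : ℝ≥0∞) : EReal)
      ≤ ((ENNReal.ofReal ((2 * (1 + a)) * (1 - x)) : ℝ≥0∞) : EReal) :=
        EReal.coe_ennreal_le_coe_ennreal_iff.mpr hfinal_en
  _ = (((2 * (1 + a)) * (1 - x) : ℝ) : EReal) := by
        rw [EReal.coe_ennreal_ofReal, max_eq_left (by nlinarith)]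
  _ ≤ (((2 * (1 + a)) * Real.log t : ℝ) : EReal) := by
        apply EReal.coe_le_coe_iff.mpr
        nlinarith
  _ = ((2 * (1 + a) : ℝ) : EReal) * Theta m var a φ ψ := by
        rw [hlog, ← EReal.coe_mul]

end HilbertCone
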